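/- Let (Ω, 𝔉, μ) be a probability space, γ > 0 a learning rate, δ ∈ (0,1) a target failure probability, t₀ ≥ 1 an initial time, and T ≥ 1 a number of time steps. For each t let R_t : Ω → ℝ and C_t : Ω → ℝ be measurable (R_t is the robustness prediction error ρ̂_t − ρ_t and C_t the ACP prediction-region threshold), and define the miscoverage indicator e_t(ω) = 1 if R_t(ω) > C_t(ω) and e_t(ω) = 0 otherwise. Let δ'_t : Ω → ℝ satisfy, for every ω, the ACP recursion δ'_{t+1}(ω) = δ'_t(ω) + γ·(δ − e_t(ω)) for all t ≥ t₀, with δ'_{t₀}(ω) = δ, and suppose that for every t ≥ t₀ and every ω, δ'_t(ω) < 0 implies e_t(ω) = 0 and δ'_t(ω) > 1 implies e_t(ω) = 1. Then 1 − δ − p₁ ≤ (1/T)·∑_{t=t₀}^{t₀+T−1} μ{ω : R_t(ω) ≤ C_t(ω)} ≤ 1 − δ + p₂, where p₁ = (δ + γ)/(T·γ) and p₂ = ((1 − δ) + γ)/(T·γ). -/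

import Mathlib

open MeasureTheory

/-- Lemma 1: average coverage of adaptive conformal prediction. With miscoverage
indicators `e t ω = 1` iff `R t ω > C t ω` and the ACP recursion starting at `δ` at
time `t₀`, the time-averaged coverage probability over `[t₀, t₀+T−1]` lies within
`[1−δ−p₁, 1−δ+p₂]`, where `p₁ = (δ+γ)/(Tγ)` and `p₂ = ((1−δ)+γ)/(Tγ)`. -/
theorem acp_average_coverage
    {Ω : Type*} [MeasurableSpace Ω] (μ : Measure Ω) [IsProbabilityMeasure μ]
    (γ δ : ℝ) (hγ : 0 < γ) (hδ : δ ∈ Set.Ioo (0 : ℝ) 1)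
    (t₀ T : ℕ) (ht₀ : 1 ≤ t₀) (hT : 1 ≤ T)
    (R C : ℕ → Ω → ℝ)
    (hR : ∀ t, Measurable (R t)) (hC : ∀ t, Measurable (C t))
    (e : ℕ → Ω → ℝ)
    (he : ∀ t ω, e t ω = if R t ω > C t ω then 1 else 0)
    (δ' : ℕ → Ω → ℝ)
    (hrec : ∀ t, t₀ ≤ t → ∀ ω, δ' (t + 1) ω = δ' t ω + γ * (δ - e t ω))
    (hinit : ∀ ω, δ' t₀ ω = δ)
    (hlow : ∀ t, t₀ ≤ t → ∀ ω, δ' t ω < 0 → e t ω = 0)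
    (hhigh : ∀ t, t₀ ≤ t → ∀ ω, δ' t ω > 1 → e t ω = 1) :
    1 - δ - (δ + γ) / ((T : ℝ) * γ) ≤
      (1 / (T : ℝ)) * ∑ t ∈ Finset.Icc t₀ (t₀ + T - 1), (μ {ω | R t ω ≤ C t ω}).toReal ∧
    (1 / (T : ℝ)) * ∑ t ∈ Finset.Icc t₀ (t₀ + T - 1), (μ {ω | R t ω ≤ C t ω}).toReal ≤
      1 - δ + ((1 - δ) + γ) / ((T : ℝ) * γ) := by
  obtain ⟨hδ0, hδ1⟩ := hδ
  have hT' : (0 : ℝ) < T := by exact_mod_cast hT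
  -- e is 0/1 valued
  have he01 : ∀ t ω, 0 ≤ e t ω ∧ e t ω ≤ 1 := by
    intro t ω; rw [he]; split <;> norm_num
  -- δ' stays in [-γ, 1+γ]
  have hbound : ∀ t, t₀ ≤ t → ∀ ω, -γ ≤ δ' t ω ∧ δ' t ω ≤ 1 + γ := by
    intro t ht
    induction t, ht using Nat.le_induction with
    | base => intro ω; rw [hinit]; constructor <;> nlinarith
    | succ n hn ih =>
      intro ω
      obtain ⟨hl, hu⟩ := ih ω
      rw [hrec n hn ω]
      by_cases h0 : δ' n ω < 0
      · rw [hlow n hn ω h0]; constructor <;> nlinarith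
      · by_cases h1 : δ' n ω > 1
        · rw [hhigh n hn ω h1]; constructor <;> nlinarith
        · push_neg at h0 h1
          obtain ⟨he0, he1⟩ := he01 n ω
          constructor <;> nlinarith
  -- telescoping
  have htel : ∀ n : ℕ, ∀ ω, δ' (t₀ + n) ω =
      δ + γ * ((n : ℝ) * δ - ∑ i ∈ Finset.range n, e (t₀ + i) ω) := by
    intro n
    induction n with
    | zero => intro ω; simp [hinit]
    | succ n ih =>
      intro ω
      have h1 : t₀ + (n + 1) = (t₀ + n) + 1 := by ring
      rw [h1, hrec (t₀ + n) (Nat.le_add_right _ _) ω, ih ω, Finset.sum_range_succ]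
      push_cast; ring
  -- pointwise bound on the sum of indicators
  have hS : ∀ ω,
      (T : ℝ) * δ - ((1 - δ) + γ) / γ ≤ ∑ i ∈ Finset.range T, e (t₀ + i) ω ∧
      (∑ i ∈ Finset.range T, e (t₀ + i) ω) ≤ (T : ℝ) * δ + (δ + γ) / γ := by
    intro ω
    have h' := htel T ω
    have hb := hbound (t₀ + T) (Nat.le_add_right _ _) ω
    have hγ' : γ ≠ 0 := ne_of_gt hγ
    have e1 : γ * (((1 - δ) + γ) / γ) = (1 - δ) + γ := by field_simp
    have e2 : γ * ((δ + γ) / γ) = δ + γ := by field_simp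
    constructor
    · nlinarith [hb.2]
    · nlinarith [hb.1]
  -- measurability / integrability of e
  have hsets : ∀ t, MeasurableSet {ω | R t ω > C t ω} := fun t =>
    measurableSet_lt (hC t) (hR t)
  have hee : ∀ t, e t = Set.indicator {ω | R t ω > C t ω} (fun _ => (1 : ℝ)) := by
    intro t; funext ω
    rw [he]; simp [Set.indicator_apply, Set.mem_setOf_eq]
  have heInt : ∀ t, Integrable (e t) μ := by
    intro t; rw [hee t]; exact (integrable_const 1).indicator (hsets t)
  have heIntegral : ∀ t, ∫ ω, e t ω ∂μ = (μ {ω | R t ω > C t ω}).toReal := by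
    intro t
    rw [hee t, integral_indicator_const _ (hsets t)]
    simp
    rfl
  set A : ℝ := ∑ i ∈ Finset.range T, (μ {ω | R (t₀ + i) ω > C (t₀ + i) ω}).toReal with hA
  have hSInt : Integrable (fun ω => ∑ i ∈ Finset.range T, e (t₀ + i) ω) μ :=
    integrable_finset_sum _ fun i _ => heInt _
  have hAeq : ∫ ω, (∑ i ∈ Finset.range T, e (t₀ + i) ω) ∂μ = A := by
    rw [integral_finset_sum _ fun i _ => heInt _]
    exact Finset.sum_congr rfl fun i _ => heIntegral _
  have hub : A ≤ (T : ℝ) * δ + (δ + γ) / γ := by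
    have := integral_mono hSInt (integrable_const _) fun ω => (hS ω).2
    rwa [hAeq, integral_const, probReal_univ, one_smul] at this
  have hlb : (T : ℝ) * δ - ((1 - δ) + γ) / γ ≤ A := by
    have := integral_mono (integrable_const _) hSInt fun ω => (hS ω).1
    rwa [hAeq, integral_const, probReal_univ, one_smul] at this
  -- coverage = 1 - miscoverage
  have hcov : ∀ t, (μ {ω | R t ω ≤ C t ω}).toReal =
      1 - (μ {ω | R t ω > C t ω}).toReal := by
    intro t
    have hcompl : {ω | R t ω ≤ C t ω} = {ω | R t ω > C t ω}ᶜ := by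
      ext ω; simp [not_lt]
    rw [hcompl, measure_compl (hsets t) (measure_ne_top μ _), measure_univ,
      ENNReal.toReal_sub_of_le prob_le_one ENNReal.one_ne_top, ENNReal.toReal_one]
  -- rewrite the Icc sum
  have hIcc : ∑ t ∈ Finset.Icc t₀ (t₀ + T - 1), (μ {ω | R t ω ≤ C t ω}).toReal
      = (T : ℝ) - A := by
    have h0 : Finset.Icc t₀ (t₀ + T - 1) = Finset.Ico t₀ (t₀ + T) := by
      rw [← Finset.Ico_add_one_right_eq_Icc]
      congr 1
      omega
    have h1 : t₀ + T - t₀ = T := by omega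
    rw [h0, Finset.sum_Ico_eq_sum_range, h1, hA]
    rw [Finset.sum_congr rfl fun i _ => hcov (t₀ + i), Finset.sum_sub_distrib]
    simp
  rw [hIcc]
  have key1 : (1 / (T : ℝ)) * ((T : ℝ) - A) = 1 - A / T := by field_simp
  have key2 : ((T : ℝ) * δ + (δ + γ) / γ) / T = δ + (δ + γ) / ((T : ℝ) * γ) := by
    field_simp
  have key3 : ((T : ℝ) * δ - ((1 - δ) + γ) / γ) / T = δ - ((1 - δ) + γ) / ((T : ℝ) * γ) := by
    field_simp
  have hdiv1 : A / T ≤ δ + (δ + γ) / ((T : ℝ) * γ) := by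
    rw [← key2]; exact div_le_div_of_nonneg_right hub hT'.le
  have hdiv2 : δ - ((1 - δ) + γ) / ((T : ℝ) * γ) ≤ A / T := by
    rw [← key3]; exact div_le_div_of_nonneg_right hlb hT'.le
  constructor
  · rw [key1]; linarith
  · rw [key1]; linarith
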